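/- Duality gap characterization via convexification: the optimal value of the Lagrangian dual sup_{λ} inf_{x ∈ D}(cᵀx + λᵀ(b − Ax)) for min{cᵀx : Ax = b, x ∈ D} with D ⊆ ℝⁿ finite equals inf{cᵀx : Ax = b, x ∈ conv(D)} (assuming the latter is feasible); in particular the Lagrangian dual bound equals the optimum over the convex hull of the discrete set, and hence lies between the LP and integer optimal values. -/

import Mathlib

set_option maxHeartbeats 1000000


open Matrix Pointwise

private lemma geoffrion_aux_lin {n m : ℕ} (c : Fin n → ℝ) (A : Matrix (Fin m) (Fin n) ℝ)
    (lam : Fin m → ℝ) :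
    IsLinearMap ℝ (fun x : Fin n → ℝ =>
      ∑ j, c j * x j - ∑ i, lam i * A.mulVec x i) := by
  constructor
  · intro x y
    simp only [Matrix.mulVec_add, Pi.add_apply, mul_add]
    rw [Finset.sum_add_distrib, Finset.sum_add_distrib]
    ring
  · intro a x
    simp only [Matrix.mulVec_smul, Pi.smul_apply, smul_eq_mul, mul_sub, Finset.mul_sum]
    congr 1 <;> exact Finset.sum_congr rfl fun _ _ => by ring

private lemma geoffrion_aux_dotlin {n : ℕ} (c : Fin n → ℝ) :
    IsLinearMap ℝ (fun x : Fin n → ℝ => ∑ j, c j * x j) := by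
  constructor
  · intro x y
    simp only [Pi.add_apply, mul_add]
    exact Finset.sum_add_distrib
  · intro a x
    simp only [Pi.smul_apply, smul_eq_mul, Finset.mul_sum]
    exact Finset.sum_congr rfl fun _ _ => by ring

/-- Geoffrion's duality-gap characterization. For
`min {cᵀx : Ax = b, x ∈ D}` with `D` finite and nonempty and
`{x ∈ conv(D) : Ax = b} ≠ ∅`, the Lagrangian dual optimal value
`sup_λ inf_{x∈D} (cᵀx + λᵀ(b − Ax))` equals
`inf {cᵀx : x ∈ conv(D), Ax = b}` (values in `EReal`). -/
theorem geoffrion_dual_equals_convexification {n m : ℕ}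
    (D : Set (Fin n → ℝ)) (hDfin : D.Finite) (hDne : D.Nonempty)
    (c : Fin n → ℝ) (A : Matrix (Fin m) (Fin n) ℝ) (b : Fin m → ℝ)
    (hfeas : {x : Fin n → ℝ | x ∈ convexHull ℝ D ∧ A.mulVec x = b}.Nonempty) :
    (⨆ lam : Fin m → ℝ,
        ⨅ x : D, ((∑ j, c j * (x : Fin n → ℝ) j
          + ∑ i, lam i * (b i - A.mulVec (x : Fin n → ℝ) i) : ℝ) : EReal))
    = ⨅ x : {x : Fin n → ℝ // x ∈ convexHull ℝ D ∧ A.mulVec x = b},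
        ((∑ j, c j * (x : Fin n → ℝ) j : ℝ) : EReal) := by
  classical
  have hobjcont : Continuous fun x : Fin n → ℝ => ∑ j, c j * x j :=
    continuous_finset_sum _ fun j _ => continuous_const.mul (continuous_apply j)
  have hmulcont : Continuous fun x : Fin n → ℝ => A.mulVec x := by
    refine continuous_pi fun i => ?_
    show Continuous fun x : Fin n → ℝ => ∑ j, A i j * x j
    exact continuous_finset_sum _ fun j _ => continuous_const.mul (continuous_apply j)
  have hKcomp : IsCompact {x : Fin n → ℝ | x ∈ convexHull ℝ D ∧ A.mulVec x = b} :=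
    (hDfin.isCompact_convexHull ℝ).inter_right (isClosed_eq hmulcont continuous_const)
  obtain ⟨xs, hxsK, hxsmin'⟩ := hKcomp.exists_isMinOn hfeas hobjcont.continuousOn
  set Z : ℝ := ∑ j, c j * xs j with hZ
  have hmin : ∀ x : Fin n → ℝ, x ∈ convexHull ℝ D → A.mulVec x = b →
      Z ≤ ∑ j, c j * x j := fun x h1 h2 => hxsmin' (Set.mem_setOf.2 ⟨h1, h2⟩)
  -- split of the Lagrangian sum
  have hsplit : ∀ (lam : Fin m → ℝ) (x : Fin n → ℝ),
      ∑ i, lam i * (b i - A.mulVec x i)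
        = ∑ i, lam i * b i - ∑ i, lam i * A.mulVec x i := by
    intro lam x
    rw [← Finset.sum_sub_distrib]
    exact Finset.sum_congr rfl fun i _ => by ring
  -- RHS equals Z
  have hRHS : (⨅ x : {x : Fin n → ℝ // x ∈ convexHull ℝ D ∧ A.mulVec x = b},
        ((∑ j, c j * (x : Fin n → ℝ) j : ℝ) : EReal)) = (Z : EReal) := by
    apply le_antisymm
    · exact iInf_le_of_le ⟨xs, hxsK⟩ le_rfl
    · exact le_iInf fun x => EReal.coe_le_coe_iff.2 (hmin x x.2.1 x.2.2)
  rw [hRHS]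
  apply le_antisymm
  · -- weak duality
    refine iSup_le fun lam => ?_
    obtain ⟨x₁, hx₁mem, hx₁min⟩ := hDfin.toFinset.exists_min_image
      (fun x => ∑ j, c j * x j + ∑ i, lam i * (b i - A.mulVec x i))
      (by rwa [Set.Finite.toFinset_nonempty])
    rw [hDfin.mem_toFinset] at hx₁mem
    have hsub : convexHull ℝ D ⊆ {x : Fin n → ℝ |
        (∑ j, c j * x₁ j + ∑ i, lam i * (b i - A.mulVec x₁ i)) - ∑ i, lam i * b i
          ≤ ∑ j, c j * x j - ∑ i, lam i * A.mulVec x i} := by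
      refine convexHull_min ?_ (convex_halfSpace_ge (geoffrion_aux_lin c A lam) _)
      intro x hx
      have h := hx₁min x (hDfin.mem_toFinset.2 hx)
      rw [hsplit lam x] at h
      simp only [Set.mem_setOf_eq]
      linarith
    have hxs_in := hsub hxsK.1
    simp only [Set.mem_setOf_eq] at hxs_in
    have hAxs : ∑ i, lam i * A.mulVec xs i = ∑ i, lam i * b i := by
      rw [hxsK.2]
    have hfZ : ∑ j, c j * x₁ j + ∑ i, lam i * (b i - A.mulVec x₁ i) ≤ Z := by
      rw [hZ]; linarith
    calc (⨅ x : D, ((∑ j, c j * (x : Fin n → ℝ) j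
            + ∑ i, lam i * (b i - A.mulVec (x : Fin n → ℝ) i) : ℝ) : EReal))
        ≤ ((∑ j, c j * x₁ j + ∑ i, lam i * (b i - A.mulVec x₁ i) : ℝ) : EReal) :=
          iInf_le _ (⟨x₁, hx₁mem⟩ : D)
      _ ≤ (Z : EReal) := EReal.coe_le_coe_iff.2 hfZ
  · -- strong duality
    have key : ∀ ε : ℝ, 0 < ε → ∃ lam : Fin m → ℝ, ∀ x ∈ D,
        Z - ε ≤ ∑ j, c j * x j + ∑ i, lam i * (b i - A.mulVec x i) := by
      intro ε hε
      set Lin : (Fin n → ℝ) →ₗ[ℝ] (Fin m → ℝ) × ℝ :=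
        LinearMap.prod A.mulVecLin (IsLinearMap.mk' _ (geoffrion_aux_dotlin c)) with hLin
      set L : (Fin n → ℝ) → (Fin m → ℝ) × ℝ :=
        fun x => ((-b, 0) : (Fin m → ℝ) × ℝ) + Lin x with hL
      have hLx : ∀ x : Fin n → ℝ, L x = (A.mulVec x - b, ∑ j, c j * x j) := by
        intro x
        simp only [hL, hLin, LinearMap.prod_apply, Function.prod, Prod.mk_add_mk, Prod.mk.injEq]
        constructor
        · ext i; simp [Matrix.mulVecLin_apply, sub_eq_neg_add]
        · simp [IsLinearMap.mk'_apply]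
      have hLcont : Continuous L := continuous_const.add Lin.continuous_of_finiteDimensional
      have hKcompact : IsCompact (L '' convexHull ℝ D) :=
        (hDfin.isCompact_convexHull ℝ).image hLcont
      have hKconv : Convex ℝ (L '' convexHull ℝ D) := by
        have h := ((convex_convexHull ℝ D).linear_image Lin).translate ((-b, 0))
        rw [Set.image_image] at h
        exact h
      have hCclosed : IsClosed (({(0 : Fin m → ℝ)} ×ˢ Set.Ici (0:ℝ))) :=
        isClosed_singleton.prod isClosed_Ici
      have hCconv : Convex ℝ (({(0 : Fin m → ℝ)} ×ˢ Set.Ici (0:ℝ))) :=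
        (convex_singleton _).prod (convex_Ici _)
      set Q : Set ((Fin m → ℝ) × ℝ) :=
        L '' convexHull ℝ D + ({(0 : Fin m → ℝ)} ×ˢ Set.Ici (0:ℝ)) with hQdef
      have hQclosed : IsClosed Q := hCclosed.add_left_of_isCompact hKcompact
      have hQconv : Convex ℝ Q := hKconv.add hCconv
      have hmemQ : ∀ x : Fin n → ℝ, x ∈ convexHull ℝ D → ∀ t : ℝ, 0 ≤ t →
          L x + ((0 : Fin m → ℝ), t) ∈ Q := by
        intro x hx t ht
        exact Set.add_mem_add ⟨x, hx, rfl⟩ (Set.mem_prod.2 ⟨rfl, ht⟩)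
      have hq_not : (((0 : Fin m → ℝ), Z - ε) : (Fin m → ℝ) × ℝ) ∉ Q := by
        intro hmem
        rw [hQdef, Set.mem_add] at hmem
        obtain ⟨p, hp, r, hr, hsum⟩ := hmem
        obtain ⟨x, hxhull, rfl⟩ := hp
        rw [Set.mem_prod] at hr
        obtain ⟨hr1, hr2⟩ := hr
        rw [hLx x] at hsum
        have h1 := congrArg Prod.fst hsum
        have h2 := congrArg Prod.snd hsum
        simp only [Prod.fst_add, Prod.snd_add] at h1 h2
        rw [Set.mem_singleton_iff] at hr1
        rw [hr1, add_zero] at h1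
        have hAx : A.mulVec x = b := by
          have := sub_eq_zero.mp h1
          exact this
        have hge := hmin x hxhull hAx
        have hr2' : (0:ℝ) ≤ r.2 := hr2
        have : (∑ j, c j * x j) + r.2 = Z - ε := h2
        linarith
      obtain ⟨φ, u, hqu, hQu⟩ := geometric_hahn_banach_point_closed hQconv hQclosed hq_not
      set μ : ℝ := φ ((0 : Fin m → ℝ), (1:ℝ)) with hμ
      have hφ0 : ∀ s : ℝ, φ ((0 : Fin m → ℝ), s) = s * μ := by
        intro s
        have h : (((0 : Fin m → ℝ), s) : (Fin m → ℝ) × ℝ)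
            = s • (((0 : Fin m → ℝ), (1:ℝ)) : (Fin m → ℝ) × ℝ) := by
          rw [Prod.smul_mk]; simp
        rw [h, _root_.map_smul, smul_eq_mul]
      have hLxs : L xs = (((0 : Fin m → ℝ), Z) : (Fin m → ℝ) × ℝ) := by
        rw [hLx xs, hxsK.2, sub_self]
      have hp₀Q : L xs ∈ Q := by
        have := hmemQ xs hxsK.1 0 le_rfl
        simpa [Prod.mk_zero_zero] using this
      have hup₀ : u < φ (L xs) := hQu _ hp₀Q
      -- μ ≥ 0
      have hμnonneg : 0 ≤ μ := by
        by_contra hneg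
        push_neg at hneg
        set t : ℝ := (φ (L xs) - u) / (-μ) + 1 with ht
        have htpos : 0 < t := by
          rw [ht]
          have h1 : (0:ℝ) < φ (L xs) - u := by linarith
          have h2 : (0:ℝ) < -μ := by linarith
          have : 0 < (φ (L xs) - u) / (-μ) := div_pos h1 h2
          linarith
        have hmem := hmemQ xs hxsK.1 t htpos.le
        have hlt := hQu _ hmem
        have hφt : φ (L xs + ((0 : Fin m → ℝ), t)) = φ (L xs) + t * μ := by
          rw [_root_.map_add, hφ0 t]
        rw [hφt] at hlt
        have hcancel : (φ (L xs) - u) / (-μ) * (-μ) = φ (L xs) - u :=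
          div_mul_cancel₀ _ (by linarith : (-μ) ≠ 0)
        have htμ : t * μ = -(φ (L xs) - u) + μ := by
          rw [ht]
          nlinarith [hcancel]
        linarith
      -- μ > 0
      have hμpos : 0 < μ := by
        rcases hμnonneg.lt_or_eq with h | h
        · exact h
        · exfalso
          have h1 : φ (((0 : Fin m → ℝ), Z - ε) : (Fin m → ℝ) × ℝ) = (Z - ε) * μ := hφ0 _
          have h2 : φ (L xs) = Z * μ := by rw [hLxs, hφ0]
          rw [← h] at h1 h2
          simp only [mul_zero] at h1 h2
          rw [h1] at hqu
          rw [h2] at hup₀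
          linarith
      have hμne : μ ≠ 0 := ne_of_gt hμpos
      -- the linear functional in the first coordinate
      set ψ : (Fin m → ℝ) →ₗ[ℝ] ℝ :=
        (φ.toLinearMap).comp (LinearMap.inl ℝ (Fin m → ℝ) ℝ) with hψ
      have hψap : ∀ y : Fin m → ℝ, ψ y = φ (y, 0) := fun y => rfl
      have hφsplit : ∀ (y : Fin m → ℝ) (s : ℝ), φ (y, s) = ψ y + s * μ := by
        intro y s
        have : ((y, s) : (Fin m → ℝ) × ℝ) = (y, 0) + ((0 : Fin m → ℝ), s) := by simp
        rw [this, _root_.map_add, hφ0 s, hψap]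
      refine ⟨fun i => -(ψ (fun j => if i = j then 1 else 0)) / μ, ?_⟩
      intro x hxD
      have hxQ : L x ∈ Q := by
        have := hmemQ x (subset_convexHull ℝ D hxD) 0 le_rfl
        simpa [Prod.mk_zero_zero] using this
      have hux := hQu _ hxQ
      rw [hLx x, hφsplit] at hux
      have hq : φ (((0 : Fin m → ℝ), Z - ε) : (Fin m → ℝ) × ℝ) = (Z - ε) * μ := hφ0 _
      rw [hq] at hqu
      -- hqu : (Z - ε) * μ < u ; hux : u < ψ (A x - b) + (∑ c x) * μ
      have hsum2 : ∑ i, (-(ψ (fun j => if i = j then 1 else 0)) / μ) * (b i - A.mulVec x i)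
          = ψ (A.mulVec x - b) / μ := by
        rw [LinearMap.pi_apply_eq_sum_univ ψ (A.mulVec x - b), Finset.sum_div]
        refine Finset.sum_congr rfl fun i _ => ?_
        simp only [Pi.sub_apply, smul_eq_mul]
        field_simp
        ring
      rw [hsum2]
      have hmul : (Z - ε) * μ < (∑ j, c j * x j + ψ (A.mulVec x - b) / μ) * μ := by
        rw [add_mul, div_mul_cancel₀ _ hμne]
        linarith
      exact le_of_lt (lt_of_mul_lt_mul_right hmul hμpos.le)
    -- conclude Z ≤ sup
    refine le_of_forall_lt fun w hw => ?_
    have hbig : ∀ ε : ℝ, 0 < ε → ((Z - ε : ℝ) : EReal) ≤ (⨆ lam : Fin m → ℝ,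
        ⨅ x : D, ((∑ j, c j * (x : Fin n → ℝ) j
          + ∑ i, lam i * (b i - A.mulVec (x : Fin n → ℝ) i) : ℝ) : EReal)) := by
      intro ε hε
      obtain ⟨lam, hlam⟩ := key ε hε
      refine le_trans (le_iInf fun x : D => EReal.coe_le_coe_iff.2 (hlam x.1 x.2)) ?_
      exact le_iSup (fun lam : Fin m → ℝ =>
        ⨅ x : D, ((∑ j, c j * (x : Fin n → ℝ) j
          + ∑ i, lam i * (b i - A.mulVec (x : Fin n → ℝ) i) : ℝ) : EReal)) lam
    induction w using EReal.rec with
    | bot => exact lt_of_lt_of_le (EReal.bot_lt_coe (Z - 1)) (hbig 1 one_pos)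
    | coe r =>
        have hr : r < Z := EReal.coe_lt_coe_iff.1 hw
        refine lt_of_lt_of_le (?_ : ((r:ℝ) : EReal) < ((Z - (Z - r)/2 : ℝ) : EReal))
          (hbig ((Z - r)/2) (by linarith))
        exact EReal.coe_lt_coe_iff.2 (by linarith)
    | top => exact absurd hw (not_top_lt)
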